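/- For all reals ζ and η with 0 < ζ < η < 1/4 there exists n₀ ∈ ℕ such that the following holds for all n ≥ n₀. Let G be an n-vertex graph and S ⊆ V(G), and suppose there exist pairwise disjoint edge sets E₁, …, E_t ⊆ E(G) with t = ⌊n^{1−3η}⌋ such that |S ∖ M_{G,ζ}(E_i)| ≤ n^{1−η} for each i ∈ [t]. Then there exist a subgraph G' ⊆ G and a set B ⊆ S with the following properties: (i) |B| ≤ 2n^{1−η}; (ii) d_{G'}(v) ≥ n^{1−2ζ} for every v ∈ S∖B; (iii) for every edge e ∈ E(G') there are at least n^{1−4η} edges e' ∈ ⋃_{i∈[t]} E_i such that e and e' form a C4 in G. -/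

import Mathlib

/-- The edges `xy` and `zw` (with `{x,y}` and `{z,w}` disjoint) "form a `C₄`" via the
connecting edges `yz, wx` or `yw, zx`. -/
def FormC4With {V : Type*} (G : SimpleGraph V) (x y z w : V) : Prop :=
  (G.Adj y z ∧ G.Adj w x) ∨ (G.Adj y w ∧ G.Adj z x)

/-- `M_{G,ζ}(xy)`: the set of vertices `z ∉ {x,y}` having at least `n^(1-ζ)` neighbours
`w ∉ {x,y}` such that the edges `xy` and `zw` form a `C₄` in `G`. -/
def Mpair {V : Type*} (ζ : ℝ) (n : ℕ) (G : SimpleGraph V) (x y : V) : Set V :=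
  {z : V | z ≠ x ∧ z ≠ y ∧
    (n : ℝ) ^ (1 - ζ) ≤
      (({w : V | w ≠ x ∧ w ≠ y ∧ G.Adj z w ∧ FormC4With G x y z w} : Set V).ncard : ℝ)}

/-- `M_{G,ζ}(e)` for an edge `e` given as an unordered pair. -/
def Medge {V : Type*} (ζ : ℝ) (n : ℕ) (G : SimpleGraph V) (e : Sym2 V) : Set V :=
  {z : V | ∃ x y : V, e = s(x, y) ∧ z ∈ Mpair ζ n G x y}

/-- `M_{G,ζ}(E)` for a set of edges `E`. -/
def MsetOfEdges {V : Type*} (ζ : ℝ) (n : ℕ) (G : SimpleGraph V) (E : Set (Sym2 V)) :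
    Set V :=
  ⋃ e ∈ E, Medge ζ n G e

/-- Two non-incident edges `e`, `e'` of `G` form a `C₄` in `G`. -/
def FormC4Edges {V : Type*} (G : SimpleGraph V) (e e' : Sym2 V) : Prop :=
  e ∈ G.edgeSet ∧ e' ∈ G.edgeSet ∧ (∀ v : V, ¬ (v ∈ e ∧ v ∈ e')) ∧
    ∃ x y z w : V, e = s(x, y) ∧ e' = s(z, w) ∧ G.Adj y z ∧ G.Adj w x

open Filter Finset

lemma ev_rpow (c M : ℝ) (hc : 0 < c) : ∃ n₀ : ℕ, ∀ n, n₀ ≤ n → M ≤ (n:ℝ) ^ c := by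
  have h : Tendsto (fun n : ℕ => (n:ℝ) ^ c) atTop atTop :=
    (tendsto_rpow_atTop hc).comp (tendsto_natCast_atTop_atTop (R := ℝ))
  exact eventually_atTop.mp (h.eventually_ge_atTop M)

lemma formC4Edges_aux {n : ℕ} {G : SimpleGraph (Fin n)} {x y v w : Fin n}
    (hxy : G.Adj x y) (hvw : G.Adj v w) (hvx : v ≠ x) (hvy : v ≠ y)
    (hwx : w ≠ x) (hwy : w ≠ y) (hC : FormC4With G x y v w) :
    FormC4Edges G s(v, w) s(x, y) := by
  refine ⟨hvw, hxy, ?_, ?_⟩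
  · rintro u ⟨hu1, hu2⟩
    rw [Sym2.mem_iff] at hu1 hu2
    rcases hu1 with rfl | rfl <;> rcases hu2 with rfl | rfl <;> simp_all
  · rcases hC with ⟨h1, h2⟩ | ⟨h1, h2⟩
    · exact ⟨w, v, y, x, Sym2.eq_swap, Sym2.eq_swap, h1.symm, h2.symm⟩
    · exact ⟨v, w, y, x, rfl, Sym2.eq_swap, h1.symm, h2.symm⟩

/-- An edge is good if it forms a `C₄` with many edges of `U`. -/
def goodEdge (η : ℝ) (n : ℕ) (G : SimpleGraph (Fin n)) (U : Set (Sym2 (Fin n)))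
    (e : Sym2 (Fin n)) : Prop :=
  (n : ℝ) ^ (1 - 4 * η) ≤ (((U ∩ {e' : Sym2 (Fin n) | FormC4Edges G e e'})).ncard : ℝ)

/-- Subgraph of `G` keeping only the edges satisfying `good`. -/
def goodSub {n : ℕ} (G : SimpleGraph (Fin n)) (good : Sym2 (Fin n) → Prop) :
    SimpleGraph (Fin n) where
  Adj v w := G.Adj v w ∧ good s(v, w)
  symm := ⟨fun v w h => ⟨h.1.symm, by rw [Sym2.eq_swap]; exact h.2⟩⟩
  loopless := ⟨fun v h => G.loopless.irrefl v h.1⟩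

@[simp] lemma goodSub_adj {n : ℕ} (G : SimpleGraph (Fin n)) (good : Sym2 (Fin n) → Prop)
    (v w : Fin n) : (goodSub G good).Adj v w ↔ G.Adj v w ∧ good s(v, w) := Iff.rfl

open scoped Classical

lemma card_B_bound {n t : ℕ} (ht : 0 < t) (S : Set (Fin n)) (M : Fin t → Set (Fin n))
    (x : ℝ) (hS : ∀ i, ((S \ M i).ncard : ℝ) ≤ x) :
    ((({v | v ∈ S ∧ t < 2 * (Finset.univ.filter (fun i => v ∉ M i)).card}
      : Set (Fin n)).ncard : ℝ) ≤ 2 * x) := by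
  classical
  set bad : Fin n → ℕ := fun v => (Finset.univ.filter (fun i => v ∉ M i)).card with hbad
  set B : Set (Fin n) := {v | v ∈ S ∧ t < 2 * bad v} with hB
  have hx : (0:ℝ) ≤ x := le_trans (by positivity) (hS ⟨0, ht⟩)
  have hBsub : B ⊆ S := fun v hv => hv.1
  have hsum : ∑ v ∈ S.toFinset, bad v
      = ∑ i : Fin t, (S \ M i).toFinset.card := by
    simp only [hbad, Finset.card_filter]
    rw [Finset.sum_comm]
    refine Finset.sum_congr rfl fun i _ => ?_
    rw [← Finset.card_filter]
    congr 1
    ext v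
    simp [Set.mem_toFinset, Set.mem_diff]
  have hsum_le : (∑ v ∈ S.toFinset, (bad v : ℝ)) ≤ (t:ℝ) * x := by
    have hc : (∑ v ∈ S.toFinset, (bad v : ℝ))
        = ∑ i : Fin t, ((S \ M i).toFinset.card : ℝ) := by
      exact_mod_cast congrArg (Nat.cast : ℕ → ℝ) hsum
    rw [hc]
    calc ∑ i : Fin t, ((S \ M i).toFinset.card : ℝ)
        ≤ ∑ _i : Fin t, x := by
          refine Finset.sum_le_sum fun i _ => ?_
          rw [← Set.ncard_eq_toFinset_card']
          exact hS i
      _ = (t:ℝ) * x := by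
          rw [Finset.sum_const, Finset.card_univ, Fintype.card_fin, nsmul_eq_mul]
  have hBlow : (B.toFinset.card : ℝ) * ((t:ℝ) + 1) ≤ 2 * ∑ v ∈ S.toFinset, (bad v : ℝ) := by
    have hsub : B.toFinset ⊆ S.toFinset := by
      intro v hv
      rw [Set.mem_toFinset] at *
      exact hBsub hv
    have h1 : ∑ _v ∈ B.toFinset, ((t:ℝ) + 1) ≤ ∑ v ∈ B.toFinset, 2 * (bad v : ℝ) := by
      refine Finset.sum_le_sum fun v hv => ?_
      rw [Set.mem_toFinset] at hv
      have h2 := hv.2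
      have : (t:ℕ) + 1 ≤ 2 * bad v := h2
      exact_mod_cast this
    have h2 : ∑ v ∈ B.toFinset, 2 * (bad v : ℝ) ≤ 2 * ∑ v ∈ S.toFinset, (bad v : ℝ) := by
      rw [← Finset.mul_sum]
      have : ∑ v ∈ B.toFinset, (bad v : ℝ) ≤ ∑ v ∈ S.toFinset, (bad v : ℝ) :=
        Finset.sum_le_sum_of_subset_of_nonneg hsub (fun _ _ _ => by positivity)
      linarith
    calc (B.toFinset.card : ℝ) * ((t:ℝ) + 1) = ∑ _v ∈ B.toFinset, ((t:ℝ) + 1) := by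
          rw [Finset.sum_const, nsmul_eq_mul]
      _ ≤ _ := le_trans h1 h2
  rw [Set.ncard_eq_toFinset_card']
  have htp : (0:ℝ) < (t:ℝ) + 1 := by positivity
  have hfin : (B.toFinset.card : ℝ) * ((t:ℝ) + 1) ≤ 2 * x * ((t:ℝ) + 1) := by
    have h3 : (t:ℝ) * x ≤ ((t:ℝ) + 1) * x := by nlinarith
    nlinarith [hsum_le]
  exact le_of_mul_le_mul_right hfin htp


set_option maxHeartbeats 1600000 in
lemma degree_core (ζ η : ℝ) {n t : ℕ}
    (hnpos : 0 < (n:ℝ))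
    (H8a : (8:ℝ) ≤ (n:ℝ) ^ (η - ζ)) (H8b : (8:ℝ) ≤ (n:ℝ) ^ ζ)
    (ht_le : (t:ℝ) ≤ (n:ℝ) ^ (1 - 3*η)) (ht_ge : (n:ℝ) ^ (1 - 3*η) ≤ 2 * (t:ℝ))
    (htpos : 0 < t)
    (G : SimpleGraph (Fin n)) (E : Fin t → Set (Sym2 (Fin n)))
    (hE : ∀ i, E i ⊆ G.edgeSet)
    (hdisj : ∀ i j, i ≠ j → Disjoint (E i) (E j))
    (v : Fin n)
    (hIvc : t ≤ 2 * (Finset.univ.filter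
      (fun i : Fin t => v ∈ MsetOfEdges ζ n G (E i))).card) :
    (n:ℝ) ^ (1 - 2*ζ) ≤
      (((goodSub G (goodEdge η n G (⋃ i, E i))).neighborSet v).ncard : ℝ) := by
  set good : Sym2 (Fin n) → Prop := goodEdge η n G (⋃ i, E i) with hgooddef
  clear_value good
  set Iv : Finset (Fin t) :=
    Finset.univ.filter (fun i : Fin t => v ∈ MsetOfEdges ζ n G (E i)) with hIv
  clear_value Iv
  have htposR : (0:ℝ) < t := by exact_mod_cast htpos
  have hmul : ∀ a b : ℝ, (n:ℝ) ^ a * (n:ℝ) ^ b = (n:ℝ) ^ (a + b) :=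
    fun a b => (Real.rpow_add hnpos a b).symm
  -- choose witnesses
  have hwit : ∀ i : Fin t, ∃ q : Fin n × Fin n,
      i ∈ Iv → s(q.1, q.2) ∈ E i ∧ v ∈ Mpair ζ n G q.1 q.2 := by
    intro i
    by_cases hi : i ∈ Iv
    · have hi' := hi
      rw [hIv, Finset.mem_filter] at hi'
      have hv' : v ∈ MsetOfEdges ζ n G (E i) := hi'.2
      simp only [MsetOfEdges, Set.mem_iUnion] at hv'
      obtain ⟨e, he, hv'⟩ := hv'
      obtain ⟨x, y, rfl, hvm⟩ := hv'
      exact ⟨(x, y), fun _ => ⟨he, hvm⟩⟩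
    · exact ⟨(v, v), fun h => absurd h hi⟩
  choose p hp using hwit
  set W : Fin t → Finset (Fin n) := fun i =>
    Finset.univ.filter (fun w => w ≠ (p i).1 ∧ w ≠ (p i).2 ∧ G.Adj v w ∧
      FormC4With G (p i).1 (p i).2 v w) with hW
  clear_value W
  have hWcard : ∀ i ∈ Iv, (n:ℝ) ^ (1 - ζ) ≤ ((W i).card : ℝ) := by
    intro i hi
    obtain ⟨_, hm⟩ := hp i hi
    obtain ⟨_, _, hcard⟩ := hm
    refine le_trans hcard ?_
    have hseteq : ({w : Fin n | w ≠ (p i).1 ∧ w ≠ (p i).2 ∧ G.Adj v w ∧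
        FormC4With G (p i).1 (p i).2 v w} : Set (Fin n)) = ↑(W i) := by
      ext w; simp [hW]
    rw [hseteq, Set.ncard_coe_finset]
  set P : Finset ((_ : Fin t) × Fin n) := Iv.sigma (fun i => W i) with hP
  clear_value P
  have hPcard : (Iv.card : ℝ) * (n:ℝ) ^ (1 - ζ) ≤ (P.card : ℝ) := by
    rw [hP, Finset.card_sigma]
    push_cast
    calc (Iv.card : ℝ) * (n:ℝ) ^ (1 - ζ) = ∑ _i ∈ Iv, (n:ℝ) ^ (1 - ζ) := by
          rw [Finset.sum_const, nsmul_eq_mul]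
      _ ≤ ∑ i ∈ Iv, ((W i).card : ℝ) := Finset.sum_le_sum hWcard
  set N' : Finset (Fin n) :=
    Finset.univ.filter (fun w => (goodSub G good).Adj v w) with hN'
  clear_value N'
  have hgeo : ∀ q : (_ : Fin t) × Fin n, q ∈ P →
      s((p q.1).1, (p q.1).2) ∈ E q.1 ∧
      FormC4Edges G s(v, q.2) s((p q.1).1, (p q.1).2) ∧ G.Adj v q.2 := by
    rintro ⟨i, w⟩ hq
    rw [hP, Finset.mem_sigma] at hq
    obtain ⟨hi, hw⟩ := hq
    obtain ⟨hei, hm⟩ := hp i hi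
    obtain ⟨hvx, hvy, -⟩ := hm
    rw [hW, Finset.mem_filter] at hw
    obtain ⟨-, hwx, hwy, hadj, hC⟩ := hw
    have hxy : G.Adj (p i).1 (p i).2 := (hE i hei)
    exact ⟨hei, formC4Edges_aux hxy hadj hvx hvy hwx hwy hC, hadj⟩
  have hsplit : P.card = (P.filter (fun q => good s(v, q.2))).card
      + (P.filter (fun q => ¬ good s(v, q.2))).card :=
    (Finset.card_filter_add_card_filter_not _).symm
  have hPg : ((P.filter (fun q => good s(v, q.2))).card : ℝ) ≤ (t:ℝ) * (N'.card : ℝ) := by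
    have hsub : P.filter (fun q => good s(v, q.2)) ⊆
        (Finset.univ : Finset (Fin t)).sigma (fun _ => N') := by
      rintro ⟨i, w⟩ hq
      rw [Finset.mem_filter] at hq
      obtain ⟨hqP, hg⟩ := hq
      rw [Finset.mem_sigma]
      refine ⟨Finset.mem_univ _, ?_⟩
      rw [hN', Finset.mem_filter]
      exact ⟨Finset.mem_univ _, (hgeo _ hqP).2.2, hg⟩
    have hcc := Finset.card_le_card hsub
    rw [Finset.card_sigma, Finset.sum_const, Finset.card_univ, Fintype.card_fin,
      smul_eq_mul] at hcc
    exact_mod_cast hcc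
  have hPb : ((P.filter (fun q => ¬ good s(v, q.2))).card : ℝ)
      ≤ (n:ℝ) * (n:ℝ) ^ (1 - 4 * η) := by
    set Pb := P.filter (fun q => ¬ good s(v, q.2)) with hPbdef
    have hfib : Pb.card = ∑ w : Fin n, (Pb.filter (fun q => q.2 = w)).card :=
      Finset.card_eq_sum_card_fiberwise (fun x _ => Finset.mem_univ x.2)
    have hfibb : ∀ w : Fin n,
        ((Pb.filter (fun q => q.2 = w)).card : ℝ) ≤ (n:ℝ) ^ (1 - 4*η) := by
      intro w
      by_cases hg : good s(v, w)
      · have hemp : Pb.filter (fun q => q.2 = w) = ∅ := by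
          rw [Finset.eq_empty_iff_forall_notMem]
          rintro q hq
          rw [Finset.mem_filter] at hq
          obtain ⟨hq1, hqw⟩ := hq
          rw [hPbdef, Finset.mem_filter] at hq1
          rw [hqw] at hq1
          exact hq1.2 hg
        rw [hemp]
        simp only [Finset.card_empty, Nat.cast_zero]
        positivity
      · set C : Set (Sym2 (Fin n)) :=
          (⋃ i, E i) ∩ {e' : Sym2 (Fin n) | FormC4Edges G s(v, w) e'} with hC
        have hinj : ((Pb.filter (fun q => q.2 = w)).card : ℝ) ≤ (C.ncard : ℝ) := by
          have hcc := Finset.card_le_card_of_injOn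
            (f := fun q : (_ : Fin t) × Fin n => s((p q.1).1, (p q.1).2))
            (s := Pb.filter (fun q => q.2 = w)) (t := C.toFinset) ?_ ?_
          · rw [Set.ncard_eq_toFinset_card']
            exact_mod_cast hcc
          · rintro ⟨i, w'⟩ hq
            rw [Finset.mem_coe, Finset.mem_filter] at hq
            obtain ⟨hq, hw'⟩ := hq
            rw [hPbdef, Finset.mem_filter] at hq
            obtain ⟨hqP, -⟩ := hq
            obtain ⟨hei, hfc, -⟩ := hgeo _ hqP
            rw [Finset.mem_coe, Set.mem_toFinset, hC]
            simp only at hw'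
            subst hw'
            exact ⟨Set.mem_iUnion.mpr ⟨i, hei⟩, hfc⟩
          · rintro ⟨i1, w1⟩ hq1 ⟨i2, w2⟩ hq2 heq
            simp only [Finset.coe_filter, Set.mem_setOf_eq] at hq1 hq2
            obtain ⟨hq1', hw1⟩ := hq1
            obtain ⟨hq2', hw2⟩ := hq2
            rw [hPbdef, Finset.mem_filter, hP, Finset.mem_sigma] at hq1' hq2'
            have hi1 : i1 ∈ Iv := hq1'.1.1
            have hi2 : i2 ∈ Iv := hq2'.1.1
            have hieq : i1 = i2 := by
              by_contra hne
              have hd := hdisj i1 i2 hne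
              have he1 := (hp i1 hi1).1
              have he2 := (hp i2 hi2).1
              have heq' : s((p i1).1, (p i1).2) = s((p i2).1, (p i2).2) := heq
              rw [heq'] at he1
              exact (Set.disjoint_left.mp hd he1) he2
            subst hieq
            have hw12 : w1 = w2 := by rw [hw1, hw2]
            subst hw12
            rfl
        have hlt : (C.ncard : ℝ) < (n:ℝ) ^ (1 - 4 * η) := by
          rw [hgooddef] at hg
          unfold goodEdge at hg
          push_neg at hg
          exact hg
        linarith
    rw [hfib]
    push_cast
    calc ∑ w : Fin n, ((Pb.filter (fun q => q.2 = w)).card : ℝ)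
        ≤ ∑ _w : Fin n, (n:ℝ) ^ (1 - 4 * η) := Finset.sum_le_sum (fun w _ => hfibb w)
      _ = (n:ℝ) * (n:ℝ) ^ (1 - 4 * η) := by
          rw [Finset.sum_const, Finset.card_univ, Fintype.card_fin, nsmul_eq_mul]
  have hNset : (goodSub G good).neighborSet v = ↑N' := by
    ext w; simp [hN', SimpleGraph.mem_neighborSet]
  rw [hNset, Set.ncard_coe_finset]
  have hIvR : (t:ℝ) ≤ 2 * (Iv.card : ℝ) := by exact_mod_cast hIvc
  have hPeq : (P.card : ℝ) = ((P.filter (fun q => good s(v, q.2))).card : ℝ)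
      + ((P.filter (fun q => ¬ good s(v, q.2))).card : ℝ) := by exact_mod_cast hsplit
  have key : (t:ℝ) * (n:ℝ) ^ (1 - ζ)
      ≤ 2 * ((t:ℝ) * (N'.card:ℝ)) + 2 * ((n:ℝ) * (n:ℝ) ^ (1-4*η)) := by
    have h1 : (t:ℝ) * (n:ℝ) ^ (1 - ζ) ≤ 2 * ((Iv.card:ℝ) * (n:ℝ) ^ (1 - ζ)) := by
      have hpow : (0:ℝ) ≤ (n:ℝ) ^ (1 - ζ) := by positivity
      nlinarith
    nlinarith [hPcard, hPg, hPb, hPeq]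
  set X := (n:ℝ) ^ (2 - 3*η - ζ) with hX
  clear_value X
  have hXpos : 0 < X := by rw [hX]; positivity
  have hA : (n:ℝ) ^ (1 - 3*η) * (n:ℝ) ^ (1 - ζ) = X := by
    rw [hmul, hX]; ring_nf
  have hB2 : (n:ℝ) * (n:ℝ) ^ (1 - 4*η) * (n:ℝ) ^ (η - ζ) = X := by
    nth_rewrite 1 [← Real.rpow_one (n:ℝ)]
    rw [hmul, hmul, hX]; ring_nf
  have hC2 : (n:ℝ) ^ (1 - 3*η) * (n:ℝ) ^ (1 - 2*ζ) * (n:ℝ) ^ ζ = X := by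
    rw [hmul, hmul, hX]; ring_nf
  have hb4 : 2 * ((n:ℝ) * (n:ℝ) ^ (1 - 4*η)) ≤ X / 4 := by
    have hnn : (0:ℝ) ≤ (n:ℝ) * (n:ℝ) ^ (1 - 4*η) := by positivity
    nlinarith [hB2, H8a]
  have hs3 : X / 2 ≤ (t:ℝ) * (n:ℝ) ^ (1 - ζ) := by
    have hpow : (0:ℝ) ≤ (n:ℝ) ^ (1 - ζ) := by positivity
    nlinarith [ht_ge, hA]
  have hs4 : 2 * ((t:ℝ) * (n:ℝ) ^ (1 - 2*ζ)) ≤ X / 4 := by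
    have hpow : (0:ℝ) ≤ (n:ℝ) ^ (1 - 2*ζ) := by positivity
    have h1 : (t:ℝ) * (n:ℝ) ^ (1 - 2*ζ) ≤ (n:ℝ) ^ (1 - 3*η) * (n:ℝ) ^ (1 - 2*ζ) :=
      mul_le_mul_of_nonneg_right ht_le hpow
    nlinarith [hC2, H8b,
      mul_nonneg (Real.rpow_nonneg (le_of_lt hnpos) (1-3*η)) hpow]
  have hfin : 2 * ((t:ℝ) * (n:ℝ) ^ (1 - 2*ζ)) ≤ 2 * ((t:ℝ) * (N'.card:ℝ)) := by
    linarith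
  have hmain : (n:ℝ) ^ (1 - 2*ζ) * (t:ℝ) ≤ (N'.card:ℝ) * (t:ℝ) := by nlinarith [hfin]
  exact le_of_mul_le_mul_right hmain htposR


set_option maxHeartbeats 1600000 in
theorem stmt10 (ζ η : ℝ) (h0 : 0 < ζ) (h1 : ζ < η) (h2 : η < 1 / 4) :
    ∃ n₀ : ℕ, ∀ n : ℕ, n₀ ≤ n →
      ∀ (G : SimpleGraph (Fin n)) (S : Set (Fin n))
        (E : Fin ⌊(n : ℝ) ^ (1 - 3 * η)⌋₊ → Set (Sym2 (Fin n))),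
        (∀ i, E i ⊆ G.edgeSet) →
        (∀ i j, i ≠ j → Disjoint (E i) (E j)) →
        (∀ i, ((S \ MsetOfEdges ζ n G (E i)).ncard : ℝ) ≤ (n : ℝ) ^ (1 - η)) →
        ∃ (G' : SimpleGraph (Fin n)) (B : Set (Fin n)), G' ≤ G ∧ B ⊆ S ∧
          (B.ncard : ℝ) ≤ 2 * (n : ℝ) ^ (1 - η) ∧
          (∀ v ∈ S \ B, (n : ℝ) ^ (1 - 2 * ζ) ≤ ((G'.neighborSet v).ncard : ℝ)) ∧
          (∀ e ∈ G'.edgeSet,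
            (n : ℝ) ^ (1 - 4 * η) ≤
              ((((⋃ i, E i) ∩ {e' : Sym2 (Fin n) | FormC4Edges G e e'})).ncard : ℝ)) := by
  obtain ⟨n₁, hn₁⟩ := ev_rpow (η - ζ) 8 (by linarith)
  obtain ⟨n₂, hn₂⟩ := ev_rpow ζ 8 h0
  obtain ⟨n₃, hn₃⟩ := ev_rpow (1 - 3 * η) 2 (by linarith)
  refine ⟨max n₁ (max n₂ n₃), fun n hn => ?_⟩
  have H8a : (8:ℝ) ≤ (n:ℝ) ^ (η - ζ) := hn₁ n (le_trans (le_max_left _ _) hn)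
  have H8b : (8:ℝ) ≤ (n:ℝ) ^ ζ :=
    hn₂ n (le_trans (le_trans (le_max_left _ _) (le_max_right _ _)) hn)
  have H2 : (2:ℝ) ≤ (n:ℝ) ^ (1 - 3 * η) :=
    hn₃ n (le_trans (le_trans (le_max_right _ _) (le_max_right _ _)) hn)
  have hnpos : 0 < (n:ℝ) := by
    rcases Nat.eq_zero_or_pos n with rfl | h
    · rw [Nat.cast_zero, Real.zero_rpow (by linarith : ζ ≠ 0)] at H8b; linarith
    · exact_mod_cast h
  set t := ⌊(n : ℝ) ^ (1 - 3 * η)⌋₊ with htdef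
  intro G S E hE hdisj hS
  have ht2 : 2 ≤ t := Nat.le_floor H2
  have htpos : 0 < t := by omega
  have ht_le : (t:ℝ) ≤ (n:ℝ) ^ (1 - 3 * η) := Nat.floor_le (by positivity)
  have ht_ge : (n:ℝ) ^ (1 - 3 * η) ≤ 2 * (t:ℝ) := by
    have hf := Nat.sub_one_lt_floor ((n:ℝ) ^ (1 - 3 * η))
    rw [← htdef] at hf
    linarith
  refine ⟨goodSub G (goodEdge η n G (⋃ i, E i)),
    {v | v ∈ S ∧ t < 2 * (Finset.univ.filter
      (fun i : Fin t => v ∉ MsetOfEdges ζ n G (E i))).card},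
    fun v w h => h.1, fun v hv => hv.1, ?_, ?_, ?_⟩
  · exact card_B_bound htpos S (fun i => MsetOfEdges ζ n G (E i)) _ hS
  · rintro v ⟨hvS, hvB⟩
    have hvb : 2 * (Finset.univ.filter
        (fun i : Fin t => v ∉ MsetOfEdges ζ n G (E i))).card ≤ t := by
      by_contra h
      exact hvB ⟨hvS, by omega⟩
    have hIvc : t ≤ 2 * (Finset.univ.filter
        (fun i : Fin t => v ∈ MsetOfEdges ζ n G (E i))).card := by
      have hpart := Finset.card_filter_add_card_filter_not
        (s := (Finset.univ : Finset (Fin t)))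
        (p := fun i : Fin t => v ∈ MsetOfEdges ζ n G (E i))
      rw [Finset.card_univ, Fintype.card_fin] at hpart
      omega
    exact degree_core ζ η hnpos H8a H8b ht_le ht_ge htpos G E hE hdisj v hIvc
  · intro e he
    induction e using Sym2.ind with
    | _ a b =>
      rw [SimpleGraph.mem_edgeSet] at he
      exact he.2
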